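/- Let (a_j) and (b_j) be sequences of nonnegative reals. Suppose there exist constants 0 < q < 1, 0 < δ ≤ 1, and C > 0 such that a_{j+1} ≤ q·a_j + b_j for all j, and ∑_{j'=j}^{j+N} b_{j'}² ≤ C·(N+1)^{1-δ}·a_j² for all j, N ∈ ℕ. Then (a_j) is tail summable: there exists a constant C̃ > 0 such that ∑_{j'=j+1}^∞ a_{j'} ≤ C̃·a_j for all j ∈ ℕ. -/

import Mathlib

/-- Tail summability criterion. -/
theorem tail_summability_criterion
    (a b : ℕ → ℝ) (ha : ∀ j, 0 ≤ a j) (hb : ∀ j, 0 ≤ b j)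
    (q C δ : ℝ) (hq0 : 0 < q) (hq1 : q < 1) (hδ0 : 0 < δ) (hδ1 : δ ≤ 1) (hC : 0 < C)
    (hrec : ∀ j, a (j + 1) ≤ q * a j + b j)
    (hsum : ∀ j N : ℕ, ∑ j' ∈ Finset.Icc j (j + N), (b j') ^ 2
      ≤ C * ((N : ℝ) + 1) ^ (1 - δ) * (a j) ^ 2) :
    ∃ Ctil : ℝ, 0 < Ctil ∧ ∀ j, ∑' k : ℕ, a (j + 1 + k) ≤ Ctil * a j := by
  set β : ℝ := 1 - δ/2 with hβdef
  have hβ0 : 0 < β := by simp only [hβdef]; linarith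
  set K : ℝ := (q + Real.sqrt C) / (1 - q) with hKdef
  have hsC : 0 ≤ Real.sqrt C := Real.sqrt_nonneg C
  have hK0 : 0 < K := div_pos (by linarith) (by linarith)
  -- Cauchy–Schwarz bound on partial sums of b
  have hB : ∀ j M : ℕ, 1 ≤ M →
      ∑ i ∈ Finset.range M, b (j + i) ≤ Real.sqrt C * (M : ℝ) ^ β * a j := by
    intro j M hM
    have hM0 : (0 : ℝ) < M := by exact_mod_cast hM
    have hsq : ∑ i ∈ Finset.range M, (b (j + i)) ^ 2 ≤ C * (M : ℝ) ^ (1 - δ) * a j ^ 2 := by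
      have h := hsum j (M - 1)
      have hIcc : ∑ j' ∈ Finset.Icc j (j + (M - 1)), (b j') ^ 2
          = ∑ i ∈ Finset.range M, (b (j + i)) ^ 2 := by
        rw [← Finset.Ico_add_one_right_eq_Icc, show j + (M - 1) + 1 = j + M by omega,
          Finset.sum_Ico_eq_sum_range, Nat.add_sub_cancel_left]
      rw [hIcc] at h
      have : ((M - 1 : ℕ) : ℝ) + 1 = (M : ℝ) := by
        have : (M : ℝ) ≥ 1 := by exact_mod_cast hM
        push_cast [Nat.cast_sub hM]
        ring
      rwa [this] at h
    have hcs : (∑ i ∈ Finset.range M, b (j + i)) ^ 2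
        ≤ (M : ℝ) * ∑ i ∈ Finset.range M, (b (j + i)) ^ 2 := by
      have := sq_sum_le_card_mul_sum_sq (s := Finset.range M) (f := fun i => b (j + i))
      simpa using this
    have hexp : (M : ℝ) * ((M : ℝ) ^ (1 - δ)) = ((M : ℝ) ^ β) ^ 2 := by
      rw [← Real.rpow_natCast ((M:ℝ)^β) 2, ← Real.rpow_mul hM0.le]
      nth_rewrite 1 [← Real.rpow_one (M : ℝ)]
      rw [← Real.rpow_add hM0]
      norm_num
      ring_nf
      rw [hβdef]; ring_nf
    have hBsq : (∑ i ∈ Finset.range M, b (j + i)) ^ 2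
        ≤ (Real.sqrt C * (M : ℝ) ^ β * a j) ^ 2 := by
      have h2 : (Real.sqrt C * (M : ℝ) ^ β * a j) ^ 2 = C * ((M:ℝ)^β)^2 * a j ^ 2 := by
        rw [mul_pow, mul_pow, Real.sq_sqrt hC.le]
      rw [h2, ← hexp]
      calc (∑ i ∈ Finset.range M, b (j + i)) ^ 2
          ≤ (M : ℝ) * ∑ i ∈ Finset.range M, (b (j + i)) ^ 2 := hcs
        _ ≤ (M : ℝ) * (C * (M : ℝ) ^ (1 - δ) * a j ^ 2) := by
            exact mul_le_mul_of_nonneg_left hsq hM0.le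
        _ = C * ((M:ℝ) * (M:ℝ)^(1-δ)) * a j ^ 2 := by ring
    have hBnn : 0 ≤ ∑ i ∈ Finset.range M, b (j + i) :=
      Finset.sum_nonneg fun i _ => hb _
    have hRnn : 0 ≤ Real.sqrt C * (M : ℝ) ^ β * a j :=
      mul_nonneg (mul_nonneg hsC (by positivity)) (ha j)
    nlinarith [hBsq, hBnn, hRnn]
  -- partial-sum bound  T j M ≤ K M^β a j
  have hT : ∀ j M : ℕ, 1 ≤ M →
      ∑ k ∈ Finset.range M, a (j + 1 + k) ≤ K * (M : ℝ) ^ β * a j := by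
    intro j M hM
    set T := ∑ k ∈ Finset.range M, a (j + 1 + k) with hTdef
    have step1 : T ≤ q * (a j + T) + ∑ i ∈ Finset.range M, b (j + i) := by
      have h1 : T ≤ ∑ k ∈ Finset.range M, (q * a (j + k) + b (j + k)) := by
        apply Finset.sum_le_sum
        intro k _
        have := hrec (j + k)
        have e : j + 1 + k = (j + k) + 1 := by omega
        rw [e]; exact this
      have h2 : ∑ k ∈ Finset.range M, a (j + k) ≤ a j + T := by
        obtain ⟨M', rfl⟩ : ∃ M', M = M' + 1 := ⟨M - 1, by omega⟩
        rw [Finset.sum_range_succ']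
        simp only [Nat.add_zero]
        have : ∑ k ∈ Finset.range M', a (j + (k + 1)) ≤ T := by
          rw [hTdef]
          have hsub : ∑ k ∈ Finset.range M', a (j + 1 + k)
              ≤ ∑ k ∈ Finset.range (M' + 1), a (j + 1 + k) :=
            Finset.sum_le_sum_of_subset_of_nonneg
              (Finset.range_subset_range.2 (Nat.le_succ M')) (fun i _ _ => ha _)
          calc ∑ k ∈ Finset.range M', a (j + (k + 1))
              = ∑ k ∈ Finset.range M', a (j + 1 + k) := by
                apply Finset.sum_congr rfl; intro i _; congr 1; omega
            _ ≤ _ := hsub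
        linarith
      calc T ≤ ∑ k ∈ Finset.range M, (q * a (j + k) + b (j + k)) := h1
        _ = q * ∑ k ∈ Finset.range M, a (j + k) + ∑ k ∈ Finset.range M, b (j + k) := by
            rw [Finset.sum_add_distrib, Finset.mul_sum]
        _ ≤ q * (a j + T) + ∑ i ∈ Finset.range M, b (j + i) := by
            have := mul_le_mul_of_nonneg_left h2 hq0.le
            linarith
    have hMβ1 : (1 : ℝ) ≤ (M : ℝ) ^ β := by
      apply Real.one_le_rpow (by exact_mod_cast hM) hβ0.le
    have step2 : (1 - q) * T ≤ (q + Real.sqrt C) * (M : ℝ) ^ β * a j := by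
      have hBj := hB j M hM
      have haj := ha j
      have hq_aj : q * a j ≤ q * (M : ℝ) ^ β * a j := by
        nlinarith [mul_nonneg (mul_nonneg hq0.le (sub_nonneg.2 hMβ1)) haj]
      nlinarith [step1, hBj, hq_aj]
    rw [hKdef]
    rw [div_mul_eq_mul_div, div_mul_eq_mul_div, le_div_iff₀ (by linarith)]
    linarith [step2]
  -- choose block length N
  obtain ⟨N, hNge⟩ := exists_nat_ge (max 1 ((K + 1) ^ (2 / δ)))
  have hN1 : 1 ≤ N := by
    have := le_trans (le_max_left 1 ((K + 1) ^ (2 / δ))) hNge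
    exact_mod_cast this
  have hN0 : (0 : ℝ) < N := by exact_mod_cast hN1
  have hKN : K < (N : ℝ) ^ (δ / 2) := by
    have h1 : (K + 1) ^ (2 / δ) ≤ (N : ℝ) :=
      le_trans (le_max_right _ _) hNge
    have h2 : ((K + 1) ^ (2 / δ)) ^ (δ / 2) ≤ (N : ℝ) ^ (δ / 2) :=
      Real.rpow_le_rpow (Real.rpow_nonneg (by linarith) _) h1 (by positivity)
    have h3 : ((K + 1) ^ (2 / δ)) ^ (δ / 2) = K + 1 := by
      rw [← Real.rpow_mul (by linarith : (0:ℝ) ≤ K + 1)]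
      rw [div_mul_div_comm, mul_comm 2 δ, div_self (by positivity : (δ:ℝ) * 2 ≠ 0)]
      exact Real.rpow_one _
    linarith
  set θ : ℝ := K * (N : ℝ) ^ β / N with hθdef
  have hθ0 : 0 < θ := by
    rw [hθdef]
    exact div_pos (mul_pos hK0 (Real.rpow_pos_of_pos hN0 β)) hN0
  have hθ1 : θ < 1 := by
    rw [hθdef, div_lt_one hN0]
    calc K * (N : ℝ) ^ β < (N : ℝ) ^ (δ/2) * (N : ℝ) ^ β :=
          mul_lt_mul_of_pos_right hKN (by positivity)
      _ = (N : ℝ) := by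
          rw [← Real.rpow_add hN0, show δ/2 + β = 1 by rw [hβdef]; ring, Real.rpow_one]
  set Ctil : ℝ := K * (N : ℝ) ^ β / (1 - θ) with hCtildef
  have hCtil0 : 0 < Ctil := by
    rw [hCtildef]
    exact div_pos (mul_pos hK0 (Real.rpow_pos_of_pos hN0 β)) (by linarith)
  -- existence of a contraction step within each block
  have hstep : ∀ j : ℕ, ∃ n : ℕ, 1 ≤ n ∧ n ≤ N ∧ a (j + n) ≤ θ * a j := by
    intro j
    by_contra hcon
    push_neg at hcon
    have hlt : ∀ k ∈ Finset.range N, θ * a j < a (j + 1 + k) := by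
      intro k hk
      have := hcon (k + 1) (by omega) (by simp at hk; omega)
      have e : j + (k + 1) = j + 1 + k := by omega
      rw [e] at this
      exact this
    have hsum_lt : (N : ℝ) * (θ * a j) < ∑ k ∈ Finset.range N, a (j + 1 + k) := by
      have := Finset.sum_lt_sum_of_nonempty
        (Finset.nonempty_range_iff.2 (by omega)) hlt
      simpa [Finset.sum_const, nsmul_eq_mul] using this
    have hub := hT j N hN1
    have : (N : ℝ) * (θ * a j) = K * (N : ℝ) ^ β * a j := by
      rw [hθdef]; field_simp
    linarith
  -- main bound on all partial sums, by strong induction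
  have main : ∀ M j : ℕ, ∑ k ∈ Finset.range M, a (j + 1 + k) ≤ Ctil * a j := by
    intro M
    induction M using Nat.strong_induction_on with
    | _ M IH =>
      intro j
      by_cases hMN : M ≤ N
      · rcases Nat.eq_zero_or_pos M with hM0 | hM1
        · subst hM0; simpa using mul_nonneg hCtil0.le (ha j)
        · have h1 := hT j M hM1
          have h2 : (M : ℝ) ^ β ≤ (N : ℝ) ^ β := by
            apply Real.rpow_le_rpow (by positivity) (by exact_mod_cast hMN) hβ0.le
          have h3 : K * (M : ℝ) ^ β * a j ≤ K * (N : ℝ) ^ β * a j := by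
            have := mul_le_mul_of_nonneg_right
              (mul_le_mul_of_nonneg_left h2 hK0.le) (ha j)
            linarith
          have h4 : K * (N : ℝ) ^ β * a j ≤ Ctil * a j := by
            rw [hCtildef]
            have : K * (N : ℝ) ^ β ≤ K * (N : ℝ) ^ β / (1 - θ) := by
              rw [le_div_iff₀ (by linarith)]
              nlinarith [hθ0.le, hθ1,
                mul_nonneg (mul_pos hK0 (Real.rpow_pos_of_pos hN0 β)).le hθ0.le]
            exact mul_le_mul_of_nonneg_right this (ha j)
          linarith
      · push_neg at hMN
        obtain ⟨n, hn1, hnN, hcontr⟩ := hstep j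
        have hnM : n ≤ M := by omega
        obtain ⟨M', rfl⟩ : ∃ M', M = n + M' := ⟨M - n, by omega⟩
        rw [Finset.sum_range_add]
        have hA : ∑ i ∈ Finset.range n, a (j + 1 + i) ≤ K * (N : ℝ) ^ β * a j := by
          have h1 := hT j n hn1
          have h2 : (n : ℝ) ^ β ≤ (N : ℝ) ^ β := by
            apply Real.rpow_le_rpow (by positivity) (by exact_mod_cast hnN) hβ0.le
          have h3 := mul_le_mul_of_nonneg_right
            (mul_le_mul_of_nonneg_left h2 hK0.le) (ha j)
          linarith
        have hBpart : ∑ i ∈ Finset.range M', a (j + 1 + (n + i)) ≤ Ctil * θ * a j := by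
          have hIH : ∑ k ∈ Finset.range M', a ((j + n) + 1 + k) ≤ Ctil * a (j + n) := by
            apply IH
            omega
          have e : ∑ i ∈ Finset.range M', a (j + 1 + (n + i))
              = ∑ k ∈ Finset.range M', a ((j + n) + 1 + k) := by
            apply Finset.sum_congr rfl; intro i _; congr 1; omega
          rw [e]
          calc ∑ k ∈ Finset.range M', a ((j + n) + 1 + k) ≤ Ctil * a (j + n) := hIH
            _ ≤ Ctil * (θ * a j) := mul_le_mul_of_nonneg_left hcontr hCtil0.le
            _ = Ctil * θ * a j := by ring
        have hc : Ctil * (1 - θ) = K * (N : ℝ) ^ β := by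
          rw [hCtildef]
          exact div_mul_cancel₀ _ (ne_of_gt (by linarith : (0:ℝ) < 1 - θ))
        have key : K * (N : ℝ) ^ β * a j + Ctil * θ * a j = Ctil * a j := by
          linear_combination (-(a j)) * hc
        linarith
  refine ⟨Ctil, hCtil0, fun j => ?_⟩
  apply Real.tsum_le_of_sum_range_le (fun k => ha _) (fun M => main M j)
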